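/- Every 3-connected cubic planar graph of circumference at least 4 contains a cycle whose length ℓ satisfies 4 ≤ ℓ ≤ 10, i.e., Merker's conjecture holds for k = 4. -/

import Mathlib

open SimpleGraph

/-- The cycle spectrum of a graph: the set of lengths of its cycles. -/
def CycleLengths {V : Type*} (G : SimpleGraph V) : Set ℕ :=
  {n | ∃ (v : V) (w : G.Walk v v), w.IsCycle ∧ w.length = n}

/-- `G` has circumference at least `k`: some cycle has length at least `k`. -/
def CircumferenceAtLeast {V : Type*} (G : SimpleGraph V) (k : ℕ) : Prop :=
  ∃ n ∈ CycleLengths G, k ≤ n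

/-- A graph is cubic if every vertex has exactly three neighbours. -/
def IsCubic {V : Type*} (G : SimpleGraph V) : Prop :=
  ∀ v : V, (G.neighborSet v).ncard = 3

/-- A graph is 3-connected if it has more than 3 vertices and deleting any set of
fewer than 3 vertices leaves it connected. -/
def IsThreeConnected {V : Type*} (G : SimpleGraph V) : Prop :=
  3 < (Set.univ : Set V).ncard ∧
    ∀ s : Set V, s.Finite → s.ncard < 3 → (G.induce (sᶜ : Set V)).Connected

/-- Reversal of darts, as a permutation. -/
def dartReversal {V : Type*} (G : SimpleGraph V) : Equiv.Perm G.Dart :=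
  Function.Involutive.toPerm SimpleGraph.Dart.symm Dart.symm_involutive

/-- A combinatorial embedding of `G` on an orientable surface, given by a rotation
system: a permutation of the darts preserving tails, acting transitively on the
darts at each vertex. -/
structure PlaneEmbedding {V : Type*} (G : SimpleGraph V) where
  rot : Equiv.Perm G.Dart
  rot_tail : ∀ d : G.Dart, (rot d).toProd.1 = d.toProd.1
  rot_orbit : ∀ d e : G.Dart, d.toProd.1 = e.toProd.1 → ∃ n : ℕ, (rot ^ n) d = e

namespace PlaneEmbedding

variable {V : Type*} {G : SimpleGraph V}

/-- The face permutation of a combinatorial embedding. -/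
def facePerm (E : PlaneEmbedding G) : Equiv.Perm G.Dart :=
  (dartReversal G).trans E.rot

/-- The face (orbit of the face permutation) containing a given dart. -/
def faceOf (E : PlaneEmbedding G) (d : G.Dart) : Set G.Dart :=
  {e | ∃ n : ℤ, (E.facePerm ^ n) d = e}

/-- The set of faces of a combinatorial embedding. -/
def faces (E : PlaneEmbedding G) : Set (Set G.Dart) :=
  {s | ∃ d : G.Dart, s = E.faceOf d}

/-- A combinatorial embedding is spherical (planar) when Euler's formula
`|V| + |F| = |E| + 2` holds. -/
def IsSpherical (E : PlaneEmbedding G) : Prop :=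
  (Set.univ : Set V).ncard + E.faces.ncard = G.edgeSet.ncard + 2

end PlaneEmbedding

/-- A graph is planar if it is connected and admits a spherical combinatorial
embedding (Heffter–Edmonds). -/
def IsPlanar {V : Type*} (G : SimpleGraph V) : Prop :=
  G.Connected ∧ ∃ E : PlaneEmbedding G, E.IsSpherical

open scoped Classical

namespace MerkerAux

open Finset

/-! ### Building cycles from cyclic sequences of vertices -/

section Cyc

variable {V : Type} {G : SimpleGraph V}

/-- A walk along a sequence of successively adjacent vertices. -/
def pathSeq (G : SimpleGraph V) (t : ℕ → V) :
    (k : ℕ) → (∀ i, i < k → G.Adj (t i) (t (i + 1))) → G.Walk (t 0) (t k)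
  | 0, _ => Walk.nil
  | (k + 1), h =>
      (pathSeq G t k (fun i hi => h i (Nat.lt_succ_of_lt hi))).concat
        (h k (Nat.lt_succ_self k))

theorem pathSeq_length (t : ℕ → V) (k : ℕ) (h : ∀ i, i < k → G.Adj (t i) (t (i + 1))) :
    (pathSeq G t k h).length = k := by
  induction k with
  | zero => rfl
  | succ k ih => simp [pathSeq, Walk.length_concat, ih]

theorem pathSeq_support (t : ℕ → V) (k : ℕ) (h : ∀ i, i < k → G.Adj (t i) (t (i + 1))) :
    (pathSeq G t k h).support = (List.range (k + 1)).map t := by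
  induction k with
  | zero => rfl
  | succ k ih =>
      rw [List.range_succ]
      simp [pathSeq, Walk.support_concat, ih]

theorem pathSeq_edges (t : ℕ → V) (k : ℕ) (h : ∀ i, i < k → G.Adj (t i) (t (i + 1))) :
    (pathSeq G t k h).edges = (List.range k).map (fun i => s(t i, t (i + 1))) := by
  induction k with
  | zero => rfl
  | succ k ih =>
      rw [List.range_succ]
      simp [pathSeq, Walk.edges_concat, ih]

theorem cycle_of_seq (n : ℕ) (hn : 3 ≤ n) (t : ℕ → V)
    (hadj : ∀ i, i < n → G.Adj (t i) (t (i + 1)))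
    (hcl : t n = t 0)
    (hinj : ∀ i j, i < n → j < n → t i = t j → i = j) :
    n ∈ CycleLengths G := by
  refine ⟨t 0, (pathSeq G t n hadj).copy rfl hcl, ?_, ?_⟩
  · rw [Walk.isCycle_def]
    refine ⟨?_, ?_, ?_⟩
    · -- trail: edges nodup
      rw [Walk.isTrail_def, Walk.edges_copy, pathSeq_edges]
      refine List.Nodup.map_on ?_ List.nodup_range
      intro i hi j hj hij
      rw [List.mem_range] at hi hj
      rw [Sym2.eq_iff] at hij
      rcases hij with ⟨h1, h2⟩ | ⟨h1, h2⟩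
      · exact hinj i j hi hj h1
      · -- t i = t (j+1) and t (i+1) = t j
        rcases Nat.lt_or_ge (j + 1) n with hj1 | hj1
        · rcases Nat.lt_or_ge (i + 1) n with hi1 | hi1
          · have e1 := hinj i (j + 1) hi hj1 h1
            have e2 := hinj (i + 1) j hi1 hj h2
            omega
          · -- i + 1 = n
            have hin : i + 1 = n := by omega
            have h2' : t 0 = t j := by rw [← hcl, ← hin]; exact h2
            have e1 := hinj 0 j (by omega) hj h2'
            have e2 := hinj i (j + 1) hi hj1 h1
            omega
        · -- j + 1 = n
          have hjn : j + 1 = n := by omega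
          have h1' : t i = t 0 := by rw [h1, hjn, hcl]
          have e0 := hinj i 0 hi (by omega) h1'
          subst e0
          have e1 := hinj 1 j (by omega) hj h2
          omega
    · -- not nil
      intro hnil
      have : ((pathSeq G t n hadj).copy rfl hcl).length = n := by
        rw [Walk.length_copy, pathSeq_length]
      rw [hnil] at this
      simp at this
      omega
    · -- support tail nodup
      rw [Walk.support_copy, pathSeq_support, List.range_succ_eq_map]
      simp only [List.map_cons, List.tail_cons, List.map_map]
      refine List.Nodup.map_on ?_ List.nodup_range
      intro i hi j hj hij
      rw [List.mem_range] at hi hj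
      simp only [Function.comp_apply] at hij
      have hij' : t (i + 1) = t (j + 1) := hij
      rcases Nat.lt_or_ge (i + 1) n with hi1 | hi1
      · rcases Nat.lt_or_ge (j + 1) n with hj1 | hj1
        · exact Nat.succ_injective (hinj _ _ hi1 hj1 hij')
        · have hjn : j + 1 = n := by omega
          have h0 : t (i + 1) = t 0 := by rw [hij', hjn, hcl]
          have := hinj (i + 1) 0 hi1 (by omega) h0
          omega
      · have hin : i + 1 = n := by omega
        rcases Nat.lt_or_ge (j + 1) n with hj1 | hj1
        · have h0 : t (j + 1) = t 0 := by rw [← hij', hin, hcl]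
          have := hinj (j + 1) 0 hj1 (by omega) h0
          omega
        · omega
  · rw [Walk.length_copy, pathSeq_length]

/-- A 4-cycle from four vertices in cyclic order. -/
theorem cycle4 {a b c d : V} (hab : G.Adj a b) (hbc : G.Adj b c) (hcd : G.Adj c d)
    (hda : G.Adj d a) (hac : a ≠ c) (hbd : b ≠ d) : 4 ∈ CycleLengths G := by
  have hab' := hab.ne
  have hbc' := hbc.ne
  have hcd' := hcd.ne
  have hda' := hda.ne
  refine cycle_of_seq 4 (by norm_num)
    (fun i => if i % 4 = 0 then a else if i % 4 = 1 then b else if i % 4 = 2 then c else d)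
    ?_ (by norm_num) ?_
  · intro i hi
    interval_cases i <;> simpa using by assumption
  · intro i j hi hj hij
    interval_cases i <;> interval_cases j <;> simp_all

end Cyc

/-! ### Basic structure of cubic graphs and rotations -/

section Emb

variable {V : Type} [Fintype V] {G : SimpleGraph V}

theorem degree_eq_three (hc : IsCubic G) (v : V) : G.degree v = 3 := by
  rw [← card_neighborSet_eq_degree, ← Nat.card_eq_fintype_card, Nat.card_coe_set_eq]
  exact hc v

/-- In a cubic graph, a `bad` graph has no cycle of length between 4 and 10;
two distinct triangles sharing a vertex produce a 4-cycle. -/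
theorem share (bad : ∀ n ∈ CycleLengths G, ¬(4 ≤ n ∧ n ≤ 10)) (hc : IsCubic G)
    {a b c b' c' : V} (hab : G.Adj a b) (hbc : G.Adj b c) (hca : G.Adj c a)
    (hab' : G.Adj a b') (hb'c' : G.Adj b' c') (hc'a : G.Adj c' a)
    (h1 : b' ≠ b) (h2 : b' ≠ c) : False := by
  have hN : (G.neighborFinset a).card = 3 := by
    rw [card_neighborFinset_eq_degree]; exact degree_eq_three hc a
  have hbN : b ∈ G.neighborFinset a := by rw [mem_neighborFinset]; exact hab
  have hcN : c ∈ G.neighborFinset a := by rw [mem_neighborFinset]; exact hca.symm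
  have hb'N : b' ∈ G.neighborFinset a := by rw [mem_neighborFinset]; exact hab'
  have hc'N : c' ∈ G.neighborFinset a := by rw [mem_neighborFinset]; exact hc'a.symm
  have hcases : c' = b ∨ c' = c := by
    by_contra h
    push_neg at h
    have hsub : ({c', b, c, b'} : Finset V) ⊆ G.neighborFinset a := by
      intro x hx
      simp only [mem_insert, mem_singleton] at hx
      rcases hx with rfl | rfl | rfl | rfl <;> assumption
    have hcard : ({c', b, c, b'} : Finset V).card = 4 := by
      rw [card_insert_of_notMem (by simp [h.1, h.2, hb'c'.ne']),
        card_insert_of_notMem (by simp [hbc.ne, Ne.symm h1]),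
        card_insert_of_notMem (by simp [Ne.symm h2]), card_singleton]
    have := Finset.card_le_card hsub
    omega
  rcases hcases with rfl | rfl
  · -- c' = b : 4-cycle (a, b', b, c)
    exact bad 4 (cycle4 hab' hb'c' hbc hca hab.ne h2) ⟨le_refl _, by norm_num⟩
  · -- c' = c : 4-cycle (a, b', c, b)
    exact bad 4 (cycle4 hab' hb'c' hbc.symm hab.symm hca.ne' h1) ⟨le_refl _, by norm_num⟩

theorem dart_fiber_card (hc : IsCubic G) (v : V) :
    (Finset.univ.filter fun d : G.Dart => d.fst = v).card = 3 := by
  have hbij : (Finset.univ.filter fun d : G.Dart => d.fst = v).card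
      = (G.neighborFinset v).card := by
    apply Finset.card_bij (fun d _ => d.snd)
    · intro d hd
      rw [mem_filter] at hd
      rw [mem_neighborFinset, ← hd.2]
      exact d.adj
    · intro d1 h1 d2 h2 hsnd
      rw [mem_filter] at h1 h2
      apply Dart.ext
      rw [Prod.ext_iff]
      exact ⟨h1.2.trans h2.2.symm, hsnd⟩
    · intro w hw
      rw [mem_neighborFinset] at hw
      exact ⟨⟨(v, w), hw⟩, by simp, rfl⟩
  rw [hbij, card_neighborFinset_eq_degree]
  exact degree_eq_three hc v

variable (E : PlaneEmbedding G)

theorem rot_fst (d : G.Dart) : (E.rot d).fst = d.fst := E.rot_tail d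

theorem rot_pow_fst (n : ℕ) (d : G.Dart) : ((E.rot ^ n) d).fst = d.fst := by
  induction n with
  | zero => rfl
  | succ n ih =>
      rw [pow_succ', Equiv.Perm.mul_apply, rot_fst, ih]

theorem rot_ne (hc : IsCubic G) (d : G.Dart) : E.rot d ≠ d := by
  intro hfix
  have hcard : (Finset.univ.filter fun e : G.Dart => e.fst = d.fst).card = 3 :=
    dart_fiber_card hc d.fst
  obtain ⟨e, he, hne⟩ := Finset.exists_mem_ne (by rw [hcard]; norm_num) d
  rw [mem_filter] at he
  obtain ⟨n, hn⟩ := E.rot_orbit d e he.2.symm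
  have key : ∀ m : ℕ, (E.rot ^ m) d = d := by
    intro m
    induction m with
    | zero => rfl
    | succ m ih => rw [pow_succ', Equiv.Perm.mul_apply, ih, hfix]
  rw [key n] at hn
  exact hne hn.symm

theorem no2 (hc : IsCubic G) {a b : G.Dart} (hfst : a.fst = b.fst) (hne : a ≠ b)
    (h1 : E.rot a = b) (h2 : E.rot b = a) : False := by
  obtain ⟨x, hx, hxa, hxb⟩ : ∃ x : G.Dart, x.fst = a.fst ∧ x ≠ a ∧ x ≠ b := by
    by_contra h
    push_neg at h
    have hsub : (Finset.univ.filter fun d : G.Dart => d.fst = a.fst) ⊆ {a, b} := by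
      intro x hx
      rw [mem_filter] at hx
      simp only [mem_insert, mem_singleton]
      by_contra hxx
      push_neg at hxx
      exact hxx.2 (h x hx.2 hxx.1)
    have hle := Finset.card_le_card hsub
    rw [dart_fiber_card hc a.fst] at hle
    have hle2 : ({a, b} : Finset G.Dart).card ≤ 2 :=
      (Finset.card_insert_le _ _).trans (by simp)
    omega
  obtain ⟨n, hn⟩ := E.rot_orbit a x hx.symm
  have key : ∀ m : ℕ, (E.rot ^ m) a = a ∨ (E.rot ^ m) a = b := by
    intro m
    induction m with
    | zero => exact Or.inl rfl
    | succ m ih =>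
        rcases ih with h | h <;> rw [pow_succ', Equiv.Perm.mul_apply, h]
        · exact Or.inr h1
        · exact Or.inl h2
  rcases key n with h | h
  · rw [hn] at h; exact hxa h
  · rw [hn] at h; exact hxb h

theorem rot_cycle3 (hc : IsCubic G) {a b x : G.Dart} (hab : a.fst = b.fst)
    (hxa : x.fst = a.fst) (h1 : a ≠ b) (h2 : x ≠ a) (h3 : x ≠ b)
    (hr : E.rot a = b) : E.rot b = x ∧ E.rot x = a := by
  have hfiber : ({a, b, x} : Finset G.Dart)
      = Finset.univ.filter fun d : G.Dart => d.fst = a.fst := by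
    apply Finset.eq_of_subset_of_card_le
    · intro d hd
      simp only [mem_insert, mem_singleton] at hd
      rw [mem_filter]
      rcases hd with rfl | rfl | rfl
      · exact ⟨mem_univ _, rfl⟩
      · exact ⟨mem_univ _, hab.symm⟩
      · exact ⟨mem_univ _, hxa⟩
    · rw [dart_fiber_card hc a.fst]
      rw [card_insert_of_notMem (by simp [h1, Ne.symm h2]),
        card_insert_of_notMem (by simp [Ne.symm h3]), card_singleton]
  have hmem : ∀ d : G.Dart, d.fst = a.fst → d = a ∨ d = b ∨ d = x := by
    intro d hd
    have : d ∈ ({a, b, x} : Finset G.Dart) := by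
      rw [hfiber, mem_filter]; exact ⟨mem_univ _, hd⟩
    simpa using this
  have hrb : E.rot b = x := by
    have hfst : (E.rot b).fst = a.fst := by rw [rot_fst, ← hab]
    rcases hmem _ hfst with h | h | h
    · exact absurd (no2 E hc hab h1 hr h) id
    · exact absurd h (rot_ne E hc b)
    · exact h
  refine ⟨hrb, ?_⟩
  have hfst : (E.rot x).fst = a.fst := by rw [rot_fst, hxa]
  rcases hmem _ hfst with h | h | h
  · exact h
  · exact absurd (E.rot.injective (hr.symm ▸ h : E.rot x = E.rot a)) h2
  · exact absurd h (rot_ne E hc x)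


/-! ### Orbits of a permutation of a finite type -/

section PermOrbit

variable {α : Type} [Fintype α] (g : Equiv.Perm α)

theorem perm_periodicPt (x : α) : x ∈ Function.periodicPts ⇑g := by
  refine ⟨orderOf g, orderOf_pos g, ?_⟩
  show (⇑g)^[orderOf g] x = x
  rw [← Equiv.Perm.coe_pow, pow_orderOf_eq_one]
  rfl

/-- The orbit of `x` under `g`, as a finset. -/
noncomputable def orbF (x : α) : Finset α := Finset.univ.filter (g.SameCycle x ·)

theorem mem_orbF {x y : α} : y ∈ orbF g x ↔ g.SameCycle x y := by
  simp [orbF]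

theorem pow_minimalPeriod_apply (x : α) : (g ^ Function.minimalPeriod ⇑g x) x = x := by
  have h := Function.iterate_minimalPeriod (f := ⇑g) (x := x)
  rwa [← Equiv.Perm.coe_pow] at h

theorem minimalPeriod_pos (x : α) : 0 < Function.minimalPeriod ⇑g x :=
  Function.minimalPeriod_pos_of_mem_periodicPts (perm_periodicPt g x)

theorem sameCycle_iff_pow {x y : α} :
    g.SameCycle x y ↔ ∃ k < Function.minimalPeriod ⇑g x, (g ^ k) x = y := by
  constructor
  · intro h
    obtain ⟨i, _, hi⟩ := h.exists_pow_eq'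
    refine ⟨i % Function.minimalPeriod ⇑g x, Nat.mod_lt _ (minimalPeriod_pos g x), ?_⟩
    have := Function.iterate_mod_minimalPeriod_eq (f := ⇑g) (x := x) (n := i)
    rw [← Equiv.Perm.coe_pow, ← Equiv.Perm.coe_pow] at this
    rw [this]
    exact hi
  · rintro ⟨k, _, rfl⟩
    exact ⟨(k : ℤ), by rw [zpow_natCast]⟩

theorem pow_injOn (x : α) {i j : ℕ} (hi : i < Function.minimalPeriod ⇑g x)
    (hj : j < Function.minimalPeriod ⇑g x) (h : (g ^ i) x = (g ^ j) x) : i = j := by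
  have h' : (fun n : ℕ => (⇑g)^[n] x) i = (fun n : ℕ => (⇑g)^[n] x) j := by
    simp only [Equiv.Perm.iterate_eq_pow]
    exact h
  exact Function.iterate_injOn_Iio_minimalPeriod (Set.mem_Iio.2 hi) (Set.mem_Iio.2 hj) h'

theorem orbF_eq_image (x : α) :
    orbF g x = (Finset.range (Function.minimalPeriod ⇑g x)).image (fun n => (g ^ n) x) := by
  ext y
  rw [mem_orbF, sameCycle_iff_pow, Finset.mem_image]
  constructor
  · rintro ⟨k, hk, rfl⟩
    exact ⟨k, Finset.mem_range.2 hk, rfl⟩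
  · rintro ⟨k, hk, rfl⟩
    exact ⟨k, Finset.mem_range.1 hk, rfl⟩

theorem card_orbF (x : α) : (orbF g x).card = Function.minimalPeriod ⇑g x := by
  rw [orbF_eq_image, Finset.card_image_of_injOn, Finset.card_range]
  intro i hi j hj hij
  exact pow_injOn g x (Finset.mem_range.1 hi) (Finset.mem_range.1 hj) hij

theorem orbF_congr {x y : α} (h : g.SameCycle x y) : orbF g x = orbF g y := by
  ext z
  rw [mem_orbF, mem_orbF]
  exact ⟨fun hz => h.symm.trans hz, fun hz => h.trans hz⟩

theorem minimalPeriod_congr {x y : α} (h : g.SameCycle x y) :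
    Function.minimalPeriod ⇑g x = Function.minimalPeriod ⇑g y := by
  rw [← card_orbF, ← card_orbF, orbF_congr g h]

theorem fiber_orbF (x : α) :
    Finset.univ.filter (fun e => orbF g e = orbF g x) = orbF g x := by
  ext y
  rw [Finset.mem_filter, mem_orbF]
  constructor
  · rintro ⟨-, h⟩
    have : y ∈ orbF g y := (mem_orbF g).2 (Equiv.Perm.SameCycle.refl g y)
    rwa [h, mem_orbF] at this
  · intro h
    exact ⟨Finset.mem_univ _, orbF_congr g h.symm⟩

theorem mem_orbF_pow (x : α) (n : ℕ) : (g ^ n) x ∈ orbF g x :=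
  (mem_orbF g).2 ⟨(n : ℤ), by rw [zpow_natCast]⟩

end PermOrbit

end Emb

/-! ### Faces of the embedding -/

section Faces

variable {V : Type} [Fintype V] {G : SimpleGraph V} (E : PlaneEmbedding G)

theorem fp_apply (d : G.Dart) : E.facePerm d = E.rot d.symm := rfl

theorem fp_fst (d : G.Dart) : (E.facePerm d).fst = d.snd := by
  rw [fp_apply, rot_fst]
  rfl

theorem fp_ne_symm (hc : IsCubic G) (d : G.Dart) : E.facePerm d ≠ d.symm := by
  rw [fp_apply]
  exact rot_ne E hc d.symm

/-- The size of the face containing a dart. -/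
noncomputable def szF (d : G.Dart) : ℕ := (orbF E.facePerm d).card

/-- A dart is a `j`-dart when the face of its reversal is a triangle. -/
def isJ (d : G.Dart) : Prop := szF E d.symm = 3

theorem szF_congr {d e : G.Dart} (h : E.facePerm.SameCycle d e) : szF E d = szF E e := by
  unfold szF
  rw [orbF_congr _ h]

theorem faceOf_eq_orbF (d : G.Dart) : E.faceOf d = ↑(orbF E.facePerm d) := by
  ext e
  show (∃ n : ℤ, (E.facePerm ^ n) d = e) ↔ _
  rw [Finset.mem_coe, mem_orbF]
  exact Iff.rfl

theorem exists_small_face (hc : IsCubic G) (hE : E.IsSpherical)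
    (hTri : ∀ d : G.Dart, szF E d = 3 → ¬ isJ E d) :
    ∃ d₀ : G.Dart, szF E d₀ ≠ 3 ∧
      szF E d₀ ≤ 5 + ((orbF E.facePerm d₀).filter (isJ E)).card := by
  by_contra hcon
  push_neg at hcon
  set g := E.facePerm with hg
  set Im : Finset (Finset G.Dart) := Finset.univ.image (orbF g) with hIm
  have hImmem : ∀ F ∈ Im, ∃ d : G.Dart, orbF g d = F := by
    intro F hF
    obtain ⟨d, -, hd⟩ := Finset.mem_image.1 hF
    exact ⟨d, hd⟩
  -- S1 : total size of faces is the number of darts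
  have S1 : ∑ F ∈ Im, F.card = Fintype.card G.Dart := by
    have h1 := Finset.card_eq_sum_card_fiberwise
      (f := orbF g) (s := Finset.univ) (t := Im)
      (fun x _ => Finset.mem_image_of_mem _ (Finset.mem_univ x))
    rw [Finset.card_univ] at h1
    rw [h1]
    refine Finset.sum_congr rfl ?_
    intro F hF
    obtain ⟨d, rfl⟩ := hImmem F hF
    apply Finset.card_bij (fun x _ => x)
    · intro x hx
      rw [Finset.mem_filter]
      exact ⟨Finset.mem_univ _, (orbF_congr g ((mem_orbF g).1 hx)).symm⟩
    · intro x1 h1 x2 h2 h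
      exact h
    · intro y hy
      rw [Finset.mem_filter] at hy
      refine ⟨y, ?_, rfl⟩
      have hself : y ∈ orbF g y := (mem_orbF g).2 (Equiv.Perm.SameCycle.refl g y)
      rw [hy.2] at hself
      exact hself
  -- S2 : total j-count over faces
  have S2 : ∑ F ∈ Im, (F.filter (isJ E)).card
      = (Finset.univ.filter (isJ E)).card := by
    have h1 := Finset.card_eq_sum_card_fiberwise
      (f := orbF g) (s := Finset.univ.filter (isJ E)) (t := Im)
      (fun x _ => Finset.mem_image_of_mem _ (Finset.mem_univ x))
    rw [h1]
    refine Finset.sum_congr rfl ?_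
    intro F hF
    obtain ⟨d, rfl⟩ := hImmem F hF
    congr 1
    ext x
    simp only [Finset.mem_filter, Finset.mem_univ, true_and, mem_orbF]
    constructor
    · rintro ⟨hx, hj⟩
      exact ⟨hj, (orbF_congr g hx).symm⟩
    · rintro ⟨hj, ho⟩
      have hx : x ∈ orbF g x := (mem_orbF g).2 (Equiv.Perm.SameCycle.refl g x)
      rw [ho, mem_orbF] at hx
      exact ⟨hx, hj⟩
  -- S3 : j-darts biject with darts lying on triangular faces
  have S3 : (Finset.univ.filter (isJ E)).card
      = (Finset.univ.filter fun e : G.Dart => szF E e = 3).card := by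
    apply Finset.card_bij (fun d _ => d.symm)
    · intro d hd
      rw [Finset.mem_filter] at hd ⊢
      exact ⟨Finset.mem_univ _, hd.2⟩
    · intro d1 h1 d2 h2 h
      have := congrArg SimpleGraph.Dart.symm h
      rwa [Dart.symm_symm, Dart.symm_symm] at this
    · intro e he
      rw [Finset.mem_filter] at he
      refine ⟨e.symm, ?_, (Dart.symm_symm e)⟩
      rw [Finset.mem_filter]
      refine ⟨Finset.mem_univ _, ?_⟩
      show szF E e.symm.symm = 3
      rw [Dart.symm_symm]
      exact he.2
  -- S4 : darts on triangular faces, counted by faces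
  set τ : ℕ := (Im.filter fun F => F.card = 3).card with hτ
  have S4 : (Finset.univ.filter fun e : G.Dart => szF E e = 3).card = 3 * τ := by
    have h1 := Finset.card_eq_sum_card_fiberwise
      (f := orbF g) (s := Finset.univ.filter fun e : G.Dart => szF E e = 3) (t := Im)
      (fun x _ => Finset.mem_image_of_mem _ (Finset.mem_univ x))
    rw [h1]
    have h2 : ∀ F ∈ Im,
        ((Finset.univ.filter fun e : G.Dart => szF E e = 3).filter
          fun x => orbF g x = F).card
        = (if F.card = 3 then 3 else 0) := by
      intro F hF
      obtain ⟨d, rfl⟩ := hImmem F hF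
      have hset : ((Finset.univ.filter fun e : G.Dart => szF E e = 3).filter
          fun x => orbF g x = orbF g d)
          = (if (orbF g d).card = 3 then orbF g d else ∅) := by
        ext x
        simp only [Finset.mem_filter, Finset.mem_univ, true_and]
        constructor
        · rintro ⟨h3, ho⟩
          have hx : x ∈ orbF g x := (mem_orbF g).2 (Equiv.Perm.SameCycle.refl g x)
          rw [ho] at hx
          have hcard : (orbF g d).card = 3 := by
            rw [← ho]
            exact h3
          rw [if_pos hcard]
          exact hx
        · intro hx
          by_cases hcard : (orbF g d).card = 3
          · rw [if_pos hcard] at hx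
            have ho : orbF g x = orbF g d := (orbF_congr g ((mem_orbF g).1 hx)).symm
            refine ⟨?_, ho⟩
            show (orbF g x).card = 3
            rw [ho]
            exact hcard
          · rw [if_neg hcard] at hx
            exact absurd hx (Finset.notMem_empty x)
      rw [hset]
      by_cases hcard : (orbF g d).card = 3 <;> simp [hcard]
    rw [Finset.sum_congr rfl h2, ← Finset.sum_filter, Finset.sum_const, smul_eq_mul,
      mul_comm]
  -- per-face inequality and the tri-face j-count
  have hper : ∀ F ∈ Im, F.card ≠ 3 → 6 + (F.filter (isJ E)).card ≤ F.card := by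
    intro F hF hne
    obtain ⟨d, rfl⟩ := hImmem F hF
    have hlt := hcon d hne
    unfold szF at hlt
    rw [← hg] at hlt
    omega
  have htrij : ∀ F ∈ Im, F.card = 3 → (F.filter (isJ E)).card = 0 := by
    intro F hF h3
    obtain ⟨d, rfl⟩ := hImmem F hF
    rw [Finset.card_eq_zero, Finset.filter_eq_empty_iff]
    intro x hx
    apply hTri
    show (orbF g x).card = 3
    rw [orbF_congr g ((mem_orbF g).1 hx)] at h3
    exact h3
  -- combine: 6 * #Im ≤ #darts
  have hsplit := Finset.sum_filter_add_sum_filter_not Im (fun F => F.card = 3)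
    (fun F => F.card)
  have hsplitj := Finset.sum_filter_add_sum_filter_not Im (fun F => F.card = 3)
    (fun F => (F.filter (isJ E)).card)
  have htri_sum : ∑ F ∈ Im.filter (fun F => F.card = 3), F.card = 3 * τ := by
    rw [Finset.sum_congr rfl (fun F hF => (Finset.mem_filter.1 hF).2),
      Finset.sum_const, smul_eq_mul, mul_comm]
  have htrij_sum : ∑ F ∈ Im.filter (fun F => F.card = 3), (F.filter (isJ E)).card = 0 := by
    apply Finset.sum_eq_zero
    intro F hF
    rw [Finset.mem_filter] at hF
    exact htrij F hF.1 hF.2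
  have hnontri_sum : ∑ F ∈ Im.filter (fun F => ¬ F.card = 3),
      (6 + (F.filter (isJ E)).card) ≤ ∑ F ∈ Im.filter (fun F => ¬ F.card = 3), F.card := by
    apply Finset.sum_le_sum
    intro F hF
    rw [Finset.mem_filter] at hF
    exact hper F hF.1 hF.2
  have hτ' : (Im.filter fun F => ¬ F.card = 3).card + τ = Im.card := by
    rw [hτ, add_comm]
    exact Finset.card_filter_add_card_filter_not (p := fun F : Finset G.Dart => F.card = 3)
  have hsum6 : ∑ F ∈ Im.filter (fun F => ¬ F.card = 3), (6 + (F.filter (isJ E)).card)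
      = 6 * (Im.filter fun F => ¬ F.card = 3).card
        + ∑ F ∈ Im.filter (fun F => ¬ F.card = 3), (F.filter (isJ E)).card := by
    rw [Finset.sum_add_distrib, Finset.sum_const, smul_eq_mul, mul_comm]
  have hJ : ∑ F ∈ Im, (F.filter (isJ E)).card = 3 * τ := by
    rw [S2, S3, S4]
  have hkey : 6 * Im.card ≤ Fintype.card G.Dart := by
    rw [← S1, ← hsplit, htri_sum]
    have h1 : ∑ F ∈ Im.filter (fun F => ¬ F.card = 3), (F.filter (isJ E)).card = 3 * τ := by
      omega
    omega
  -- Euler's formula and degree counts give a contradiction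
  have hD3 : Fintype.card G.Dart = 3 * Fintype.card V := by
    rw [dart_card_eq_sum_degrees]
    rw [Finset.sum_congr rfl (fun v _ => degree_eq_three hc v), Finset.sum_const,
      smul_eq_mul, Finset.card_univ, mul_comm]
  have hD2 : Fintype.card G.Dart = 2 * G.edgeFinset.card := dart_card_eq_twice_card_edges G
  have hfaces : E.faces.ncard = Im.card := by
    have hf : E.faces = (fun F : Finset G.Dart => (↑F : Set G.Dart)) '' ↑Im := by
      ext s
      constructor
      · rintro ⟨d, rfl⟩
        refine ⟨orbF g d, ?_, (faceOf_eq_orbF E d).symm⟩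
        rw [Finset.mem_coe]
        exact Finset.mem_image_of_mem _ (Finset.mem_univ d)
      · rintro ⟨F, hF, rfl⟩
        rw [Finset.mem_coe] at hF
        obtain ⟨d, rfl⟩ := hImmem F hF
        exact ⟨d, (faceOf_eq_orbF E d).symm⟩
    rw [hf, Set.ncard_image_of_injective _ Finset.coe_injective, Set.ncard_coe_finset]
  have hV : (Set.univ : Set V).ncard = Fintype.card V := by
    rw [Set.ncard_univ, Nat.card_eq_fintype_card]
  have hEdge : G.edgeSet.ncard = G.edgeFinset.card := by
    rw [← coe_edgeFinset, Set.ncard_coe_finset]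
  have heuler := hE
  unfold PlaneEmbedding.IsSpherical at heuler
  rw [hV, hfaces, hEdge] at heuler
  omega

theorem symm_fst (d : G.Dart) : d.symm.fst = d.snd := rfl

theorem symm_snd (d : G.Dart) : d.symm.snd = d.fst := rfl

theorem dart_eq_of {d1 d2 : G.Dart} (h1 : d1.fst = d2.fst) (h2 : d1.snd = d2.snd) :
    d1 = d2 := Dart.ext _ _ (Prod.ext h1 h2)

theorem snd_ne_of_ne {d1 d2 : G.Dart} (hf : d1.fst = d2.fst) (hne : d1 ≠ d2) :
    d1.snd ≠ d2.snd := fun h => hne (dart_eq_of hf h)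

theorem dart_adj' (d : G.Dart) {x y : V} (h1 : d.fst = x) (h2 : d.snd = y) : G.Adj x y := by
  rw [← h1, ← h2]
  exact d.adj

theorem szF_eq_minimalPeriod (d : G.Dart) :
    szF E d = Function.minimalPeriod ⇑E.facePerm d := card_orbF _ d

theorem fp_three {e₀ : G.Dart} (h3 : szF E e₀ = 3) :
    E.facePerm (E.facePerm (E.facePerm e₀)) = e₀ := by
  have hm : Function.minimalPeriod ⇑E.facePerm e₀ = 3 := by
    rw [← szF_eq_minimalPeriod]
    exact h3
  have h := pow_minimalPeriod_apply E.facePerm e₀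
  rw [hm, show (3 : ℕ) = 2 + 1 from rfl, pow_succ, Equiv.Perm.mul_apply,
    show (2 : ℕ) = 1 + 1 from rfl, pow_succ, Equiv.Perm.mul_apply, pow_one] at h
  exact h

theorem orbit_enum3 {e₀ : G.Dart} (h3 : szF E e₀ = 3) (e : G.Dart)
    (he : E.facePerm.SameCycle e₀ e) :
    e = e₀ ∨ e = E.facePerm e₀ ∨ e = E.facePerm (E.facePerm e₀) := by
  have hm : Function.minimalPeriod ⇑E.facePerm e₀ = 3 := by
    rw [← szF_eq_minimalPeriod]
    exact h3
  obtain ⟨k, hk, rfl⟩ := (sameCycle_iff_pow E.facePerm).1 he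
  rw [hm] at hk
  interval_cases k
  · left
    rw [pow_zero, Equiv.Perm.one_apply]
  · right; left
    rw [pow_one]
  · right; right
    rw [show (2 : ℕ) = 1 + 1 from rfl, pow_succ, Equiv.Perm.mul_apply, pow_one]

/-- Claim A: the successor of a `j`-dart is not a `j`-dart, and its head avoids
the triangle. -/
theorem claimA (bad : ∀ n ∈ CycleLengths G, ¬(4 ≤ n ∧ n ≤ 10)) (hc : IsCubic G)
    {d : G.Dart} (hJ : isJ E d) :
    (¬ isJ E (E.facePerm d)) ∧
      ∀ e, E.facePerm.SameCycle d.symm e → (E.facePerm d).snd ≠ e.fst := by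
  have h3 : szF E d.symm = 3 := hJ
  have hclose : E.facePerm (E.facePerm (E.facePerm d.symm)) = d.symm := fp_three E h3
  set e₁ := E.facePerm d.symm with he₁
  set e₂ := E.facePerm e₁ with he₂
  have hf1' : e₁.fst = d.fst := fp_fst E d.symm
  have hf2 : e₂.fst = e₁.snd := fp_fst E e₁
  have hf0' : e₂.snd = d.snd := by
    have h := fp_fst E e₂
    rw [hclose] at h
    exact h.symm
  have hw_ne_v : e₁.snd ≠ d.fst := by
    have h := Dart.fst_ne_snd e₁
    rw [hf1'] at h
    exact Ne.symm h
  have hane' : e₂ ≠ d := by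
    intro h
    rw [h] at hf2
    exact hw_ne_v hf2.symm
  have hane : e₂.symm ≠ d.symm := fun h => hane' (Dart.symm_involutive.injective h)
  have hafst : e₂.symm.fst = d.symm.fst := by
    rw [symm_fst, symm_fst]
    exact hf0'
  have hrot1 : E.rot e₂.symm = d.symm := by
    rw [← fp_apply]
    exact hclose
  have hfd : E.facePerm d = E.rot d.symm := fp_apply E d
  have hfd_ne_b : E.facePerm d ≠ d.symm := fp_ne_symm E hc d
  have hfd_ne_a : E.facePerm d ≠ e₂.symm := by
    intro h
    rw [hfd] at h
    exact no2 E hc hafst hane hrot1 (by rw [← h])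
  have hfdfst : (E.facePerm d).fst = d.snd := fp_fst E d
  have hxa : (E.facePerm d).fst = e₂.symm.fst := by
    rw [hfdfst, symm_fst]
    exact hf0'.symm
  have hu₃v : (E.facePerm d).snd ≠ d.fst :=
    snd_ne_of_ne (show (E.facePerm d).fst = d.symm.fst by rw [hfdfst]; rfl) hfd_ne_b
  have hu₃w : (E.facePerm d).snd ≠ e₁.snd := by
    have h := snd_ne_of_ne hxa hfd_ne_a
    rwa [symm_snd, hf2] at h
  constructor
  · -- part (1)
    intro hJ'
    have h3' : szF E (E.facePerm d).symm = 3 := hJ'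
    have hcyc := rot_cycle3 E hc (a := e₂.symm) (b := d.symm) (x := E.facePerm d)
      hafst hxa hane hfd_ne_a hfd_ne_b hrot1
    have he1' : E.facePerm ((E.facePerm d).symm) = e₂.symm := by
      rw [fp_apply, Dart.symm_symm, hcyc.2]
    have hstep2 : E.facePerm (e₂.symm) = E.rot e₂ := by
      rw [fp_apply, Dart.symm_symm]
    have hrotw : E.rot e₁.symm = e₂ := by
      rw [← fp_apply]
    have hwne : e₁.symm ≠ e₂ := by
      intro h
      have h2 := congrArg (fun x : G.Dart => x.snd) h
      rw [symm_snd, hf1', hf0'] at h2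
      exact Dart.fst_ne_snd d h2
    have hwfst : e₁.symm.fst = e₂.fst := by
      rw [symm_fst, hf2]
    have he2'_ne : E.rot e₂ ≠ e₁.symm := by
      intro h
      exact no2 E hc hwfst hwne hrotw h
    have hclose' : E.facePerm (E.facePerm (E.facePerm ((E.facePerm d).symm)))
        = (E.facePerm d).symm := fp_three E h3'
    rw [he1', hstep2] at hclose'
    have hsnd' : (E.rot e₂).snd = (E.facePerm d).snd := by
      have h := fp_fst E (E.rot e₂)
      rw [hclose'] at h
      exact h.symm
    refine share bad hc (a := d.snd) (b := d.fst) (c := e₁.snd)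
      (b' := (E.facePerm d).snd) (c' := e₁.snd) ?_ ?_ ?_ ?_ ?_ ?_ hu₃v hu₃w
    · exact d.adj.symm
    · exact dart_adj' e₁ hf1' rfl
    · exact dart_adj' e₂ hf2 hf0'
    · exact dart_adj' (E.facePerm d) hfdfst rfl
    · exact (dart_adj' (E.rot e₂) (by rw [rot_fst, hf2]) hsnd').symm
    · exact dart_adj' e₂ hf2 hf0'
  · -- part (2)
    intro e he
    rcases orbit_enum3 E h3 e he with rfl | rfl | rfl
    · rw [show d.symm.fst = (E.facePerm d).fst from hfdfst.symm]
      exact Dart.snd_ne_fst (E.facePerm d)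
    · rw [← he₁, hf1']
      exact hu₃v
    · rw [← he₁, ← he₂, hf2]
      exact hu₃w

/-- A triangular face cannot have its reversal on a triangular face. -/
theorem notri (bad : ∀ n ∈ CycleLengths G, ¬(4 ≤ n ∧ n ≤ 10)) (hc : IsCubic G)
    {d : G.Dart} (h3 : szF E d = 3) : ¬ isJ E d := by
  intro hJ
  have hJ3 : szF E d.symm = 3 := hJ
  have hclose : E.facePerm (E.facePerm (E.facePerm d)) = d := fp_three E h3
  set e₁ := E.facePerm d with he₁
  set e₂ := E.facePerm e₁ with he₂
  have hf1 : e₁.fst = d.snd := fp_fst E d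
  have hf2 : e₂.fst = e₁.snd := fp_fst E e₁
  have hf0 : e₂.snd = d.fst := by
    have h := fp_fst E e₂
    rw [hclose] at h
    exact h.symm
  have hrot_a : E.rot e₂.symm = d := by
    rw [← fp_apply]
    exact hclose
  have hr : E.facePerm d.symm = E.rot d := by
    rw [fp_apply, Dart.symm_symm]
  have hane : e₂.symm ≠ d := by
    intro h
    have h2 := congrArg (fun x : G.Dart => x.snd) h
    rw [symm_snd, hf2, ← hf1] at h2
    exact Dart.snd_ne_fst e₁ h2
  have hafst : e₂.symm.fst = d.fst := by
    rw [symm_fst]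
    exact hf0
  have hrne_d : E.rot d ≠ d := rot_ne E hc d
  have hrne_a : E.rot d ≠ e₂.symm := by
    intro h
    exact no2 E hc hafst hane hrot_a (by rw [← h])
  have hrfst : (E.rot d).fst = d.fst := rot_fst E d
  have ha₃b : (E.rot d).snd ≠ d.snd := snd_ne_of_ne hrfst hrne_d
  have ha₃c : (E.rot d).snd ≠ e₁.snd := by
    have h := snd_ne_of_ne (show (E.rot d).fst = e₂.symm.fst by rw [hrfst, symm_fst, hf0])
      hrne_a
    rwa [symm_snd, hf2] at h
  have hclose' : E.facePerm (E.facePerm (E.facePerm d.symm)) = d.symm := fp_three E hJ3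
  rw [hr] at hclose'
  have hqfst : (E.facePerm (E.rot d)).fst = (E.rot d).snd := fp_fst E (E.rot d)
  have hqsnd : (E.facePerm (E.rot d)).snd = d.snd := by
    have h := fp_fst E (E.facePerm (E.rot d))
    rw [hclose'] at h
    exact h.symm
  refine share bad hc (a := d.fst) (b := d.snd) (c := e₁.snd)
    (b' := (E.rot d).snd) (c' := d.snd) ?_ ?_ ?_ ?_ ?_ ?_ ha₃b ha₃c
  · exact d.adj
  · exact dart_adj' e₁ hf1 rfl
  · exact dart_adj' e₂ hf2 hf0
  · exact dart_adj' (E.rot d) hrfst rfl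
  · exact dart_adj' (E.facePerm (E.rot d)) hqfst hqsnd
  · exact d.adj.symm

end Faces

/-! ### The main argument -/

section Main

variable {V : Type} [Fintype V] {G : SimpleGraph V}

theorem merker_core (hc : IsCubic G) (E : PlaneEmbedding G) (hE : E.IsSpherical)
    (bad : ∀ n ∈ CycleLengths G, ¬(4 ≤ n ∧ n ≤ 10)) : False := by
  obtain ⟨d₀, hnot3, hsmall⟩ := exists_small_face E hc hE (fun d h3 => notri E bad hc h3)
  set s := szF E d₀ with hs
  -- basic facts about the orbit of d₀
  have hper : (E.facePerm ^ s) d₀ = d₀ := by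
    rw [hs, szF_eq_minimalPeriod]
    exact pow_minimalPeriod_apply _ _
  have hinj : ∀ i j, i < s → j < s →
      (E.facePerm ^ i) d₀ = (E.facePerm ^ j) d₀ → i = j := by
    intro i j hi hj h
    rw [hs, szF_eq_minimalPeriod] at hi hj
    exact pow_injOn E.facePerm d₀ hi hj h
  have hfne : ∀ e : G.Dart, E.facePerm e ≠ e := by
    intro e h
    have h1 := fp_fst E e
    rw [h] at h1
    exact Dart.fst_ne_snd e h1
  have hs1 : 1 ≤ s := by
    rw [hs]
    have hne : (orbF E.facePerm d₀).Nonempty :=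
      ⟨d₀, (mem_orbF _).2 (Equiv.Perm.SameCycle.refl _ _)⟩
    exact Finset.card_pos.2 hne
  have hsne1 : s ≠ 1 := by
    intro h
    rw [h, pow_one] at hper
    exact hfne d₀ hper
  have hsne2 : s ≠ 2 := by
    intro h
    rw [h, show (2 : ℕ) = 1 + 1 from rfl, pow_succ, Equiv.Perm.mul_apply, pow_one] at hper
    -- hper : f (f d₀) = d₀
    have h1 : (E.facePerm d₀).fst = d₀.snd := fp_fst E d₀
    have h2 : (E.facePerm d₀).snd = d₀.fst := by
      have h3 := fp_fst E (E.facePerm d₀)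
      rw [hper] at h3
      exact h3.symm
    have : E.facePerm d₀ = d₀.symm := dart_eq_of h1 h2
    exact fp_ne_symm E hc d₀ this
  have hs4 : 4 ≤ s := by omega
  -- the j-darts of the face of d₀
  set A := (orbF E.facePerm d₀).filter (isJ E) with hA
  set j := A.card with hj
  set B := A.image ⇑E.facePerm with hB
  have hAsub : A ⊆ orbF E.facePerm d₀ := Finset.filter_subset _ _
  have hBsub : B ⊆ orbF E.facePerm d₀ := by
    intro b hb
    rw [hB, Finset.mem_image] at hb
    obtain ⟨a, ha, rfl⟩ := hb
    have := (mem_orbF _).1 (hAsub ha)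
    exact (mem_orbF _).2 (Equiv.Perm.sameCycle_apply_right.2 this)
  have hAisJ : ∀ a ∈ A, isJ E a := by
    intro a ha
    rw [hA, Finset.mem_filter] at ha
    exact ha.2
  have hAB : Disjoint A B := by
    rw [Finset.disjoint_left]
    intro x hx hxB
    rw [hB, Finset.mem_image] at hxB
    obtain ⟨a, ha, rfl⟩ := hxB
    exact (claimA E bad hc (hAisJ a ha)).1 (hAisJ _ hx)
  have hBcard : B.card = j := by
    rw [hB, hj]
    exact Finset.card_image_of_injective _ E.facePerm.injective
  have h2j : 2 * j ≤ s := by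
    have h1 : (A ∪ B).card = j + j := by
      rw [Finset.card_union_of_disjoint hAB, hBcard]
    have h2 : (A ∪ B).card ≤ (orbF E.facePerm d₀).card :=
      Finset.card_le_card (Finset.union_subset hAsub hBsub)
    rw [h1] at h2
    have : (orbF E.facePerm d₀).card = s := rfl
    omega
  have hs10 : s ≤ 10 := by omega
  -- the cyclic sequence of tails around the face of d₀
  set t : ℕ → V := fun n => ((E.facePerm ^ n) d₀).fst with ht
  have hdseq_succ : ∀ n, (E.facePerm ^ (n + 1)) d₀ = E.facePerm ((E.facePerm ^ n) d₀) := by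
    intro n
    rw [pow_succ', Equiv.Perm.mul_apply]
  have ht_succ : ∀ n, t (n + 1) = ((E.facePerm ^ n) d₀).snd := by
    intro n
    rw [ht]
    show ((E.facePerm ^ (n + 1)) d₀).fst = _
    rw [hdseq_succ n]
    exact fp_fst E _
  have hadj : ∀ n, G.Adj (t n) (t (n + 1)) := by
    intro n
    rw [ht_succ n]
    exact ((E.facePerm ^ n) d₀).adj
  have hperiod : ∀ n, (E.facePerm ^ (n + s)) d₀ = (E.facePerm ^ n) d₀ := by
    intro n
    rw [pow_add, Equiv.Perm.mul_apply, hper]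
  have htper : ∀ n, t (n + s) = t n := by
    intro n
    rw [ht]
    show ((E.facePerm ^ (n + s)) d₀).fst = ((E.facePerm ^ n) d₀).fst
    rw [hperiod]
  have hmem : ∀ n, (E.facePerm ^ n) d₀ ∈ orbF E.facePerm d₀ := fun n =>
    mem_orbF_pow E.facePerm d₀ n
  have hszseq : ∀ n, szF E ((E.facePerm ^ n) d₀) = s := by
    intro n
    rw [hs]
    exact (szF_congr E ((mem_orbF _).1 (hmem n))).symm
  -- case analysis on repeated vertices
  by_cases hK : ∃ k, 0 < k ∧ k < s ∧ ∃ i, t i = t (i + k)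
  · -- there is a repeat; take the minimal repeat distance
    obtain ⟨hδpos, hδlt, i0, hi0⟩ := Nat.find_spec hK
    set δ := Nat.find hK with hδdef
    have hmin : ∀ k, k < δ → ¬(0 < k ∧ k < s ∧ ∃ i, t i = t (i + k)) := fun k hk =>
      Nat.find_min hK hk
    have hsδ : 0 < s - δ ∧ s - δ < s ∧ ∃ i, t i = t (i + (s - δ)) := by
      refine ⟨by omega, by omega, i0 + δ, ?_⟩
      rw [show i0 + δ + (s - δ) = i0 + s by omega, htper]
      exact hi0.symm
    have h2δ : δ ≤ s - δ := by
      by_contra h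
      exact hmin (s - δ) (by omega) hsδ
    have hδ1 : δ ≠ 1 := by
      intro h
      rw [h, ht_succ] at hi0
      exact Dart.fst_ne_snd _ hi0
    have hδ2 : δ ≠ 2 := by
      intro h
      rw [h] at hi0
      have he : (E.facePerm ^ (i0 + 1)) d₀ = ((E.facePerm ^ i0) d₀).symm := by
        apply dart_eq_of
        · show t (i0 + 1) = _
          rw [ht_succ i0]
          rfl
        · show ((E.facePerm ^ (i0 + 1)) d₀).snd = ((E.facePerm ^ i0) d₀).fst
          have h1 : t (i0 + 2) = ((E.facePerm ^ (i0 + 1)) d₀).snd := ht_succ (i0 + 1)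
          rw [← h1, ← hi0]
      rw [hdseq_succ i0] at he
      exact fp_ne_symm E hc _ he
    have hδ3 : 3 ≤ δ := by
      rcases Nat.lt_or_ge δ 3 with h | h
      · omega
      · exact h
    have hδ5 : δ ≤ 5 := by omega
    have hshiftinj : ∀ p q, p < δ → q < δ → t (i0 + p) = t (i0 + q) → p = q := by
      intro p q hp hq h
      by_contra hne
      rcases Nat.lt_or_ge p q with hlt | hge
      · exact hmin (q - p) (by omega)
          ⟨by omega, by omega, i0 + p, by rw [show i0 + p + (q - p) = i0 + q by omega]; exact h⟩
      · have hlt : q < p := by omega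
        exact hmin (p - q) (by omega)
          ⟨by omega, by omega, i0 + q, by rw [show i0 + q + (p - q) = i0 + p by omega]; exact h.symm⟩
    rcases (by omega : δ = 3 ∨ 4 ≤ δ) with hδ3' | hδ45
    · -- δ = 3 : the block analysis
      rw [hδ3'] at hi0
      set Da := (E.facePerm ^ i0) d₀ with hDa
      set D1 := (E.facePerm ^ (i0 + 1)) d₀ with hD1
      set D2 := (E.facePerm ^ (i0 + 2)) d₀ with hD2
      set D3 := (E.facePerm ^ (i0 + 3)) d₀ with hD3
      have hfDa : E.facePerm Da = D1 := (hdseq_succ i0).symm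
      have hfD1 : E.facePerm D1 = D2 := (hdseq_succ (i0 + 1)).symm
      have hfD2 : E.facePerm D2 = D3 := (hdseq_succ (i0 + 2)).symm
      have hD1fst : D1.fst = Da.snd := by
        rw [← hfDa]
        exact fp_fst E Da
      have hD2fst : D2.fst = D1.snd := by
        rw [← hfD1]
        exact fp_fst E D1
      have hD3fst : D3.fst = D2.snd := by
        rw [← hfD2]
        exact fp_fst E D2
      have hD2snd : D2.snd = Da.fst := by
        have h1 : t (i0 + 3) = D2.snd := ht_succ (i0 + 2)
        rw [← h1, ← hi0]
      have hs6 : 6 ≤ s := by omega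
      have hxz : Da.fst ≠ D1.snd := by
        intro h
        refine hmin 2 (by omega) ⟨by omega, by omega, i0, ?_⟩
        rw [show t (i0 + 2) = D1.snd from ht_succ (i0 + 1)]
        exact h
      have hD3rot : D3 = E.rot D2.symm := by
        rw [← hfD2, fp_apply]
      have hper3 : E.facePerm (E.facePerm (E.facePerm Da)) = D3 := by
        rw [hfDa, hfD1, hfD2]
      have hD3neDa : D3 ≠ Da := by
        intro h
        have hiter : (⇑E.facePerm)^[3] Da = Da := by
          rw [show (3 : ℕ) = 2 + 1 from rfl, Function.iterate_succ_apply',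
            show (2 : ℕ) = 1 + 1 from rfl, Function.iterate_succ_apply',
            Function.iterate_one]
          rw [hper3]
          exact h
        have hle : Function.minimalPeriod ⇑E.facePerm Da ≤ 3 :=
          Function.IsPeriodicPt.minimalPeriod_le (by norm_num) hiter
        rw [← szF_eq_minimalPeriod, hszseq i0] at hle
        omega
      have hD3neD2symm : D3 ≠ D2.symm := by
        rw [hD3rot]
        exact rot_ne E hc D2.symm
      have hD3fstx : D3.fst = Da.fst := by rw [hD3fst, hD2snd]
      have hx₃x : D3.snd ≠ Da.fst := by
        rw [← hD3fstx]
        exact Dart.snd_ne_fst D3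
      have hx₃y : D3.snd ≠ Da.snd := snd_ne_of_ne hD3fstx hD3neDa
      have hx₃z : D3.snd ≠ D1.snd := by
        have h := snd_ne_of_ne (show D3.fst = D2.symm.fst by rw [hD3fst, symm_fst]) hD3neD2symm
        rwa [symm_snd, hD2fst] at h
      -- the rotation at the vertex Da.fst
      have hDaneD2symm : Da ≠ D2.symm := by
        intro h
        have h2 := congrArg (fun x : G.Dart => x.snd) h
        rw [symm_snd, hD2fst] at h2
        have h3 : D1.fst = D1.snd := by
          rw [hD1fst]
          exact h2
        exact Dart.fst_ne_snd D1 h3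
      have hcycx := rot_cycle3 E hc (a := D2.symm) (b := D3) (x := Da)
        (by rw [symm_fst, hD2snd, hD3fstx]) (by rw [symm_fst, hD2snd])
        (Ne.symm hD3neD2symm) hDaneD2symm (Ne.symm hD3neDa) hD3rot.symm
      -- hcycx : rot D3 = Da ∧ rot Da = D2.symm
      -- the predecessor dart Dm
      set Dm := (E.facePerm ^ (i0 + (s - 1))) d₀ with hDmdef
      have hfDm : E.facePerm Dm = Da := by
        rw [hDmdef, ← hdseq_succ, show i0 + (s - 1) + 1 = i0 + s by omega, hperiod]
      have hDmsymm : Dm.symm = D3 := by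
        apply E.rot.injective
        rw [hcycx.1, ← fp_apply]
        exact hfDm
      have hDm : Dm = D3.symm := by
        rw [← hDmsymm, Dart.symm_symm]
      -- the five darts of the block
      have hDmfst : Dm.fst = D3.snd := by rw [hDm, symm_fst]
      have hDmsnd : Dm.snd = Da.fst := by rw [hDm, symm_snd, hD3fstx]
      -- isJ fails on all five block darts
      have hnotJDm : ¬ isJ E Dm := by
        intro h
        have : szF E Dm.symm = 3 := h
        rw [hDmsymm, hszseq] at this
        omega
      have hnotJD3 : ¬ isJ E D3 := by
        intro h
        have h1 : szF E D3.symm = 3 := h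
        rw [← hDmsymm, Dart.symm_symm] at h1
        rw [hDmdef, hszseq] at h1
        omega
      have hrotDa : E.rot Da = D2.symm := hcycx.2
      have hnotJDa : ¬ isJ E Da := by
        intro h
        have hfDasymm : E.facePerm Da.symm = D2.symm := by
          rw [fp_apply, Dart.symm_symm, hrotDa]
        have he2 : E.facePerm.SameCycle Da.symm (E.facePerm (E.facePerm Da.symm)) :=
          Equiv.Perm.sameCycle_apply_right.2
            (Equiv.Perm.sameCycle_apply_right.2 (Equiv.Perm.SameCycle.refl _ _))
        have := (claimA E bad hc h).2 _ he2
        apply this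
        rw [hfDa, hfDasymm]
        rw [fp_fst E D2.symm, symm_snd, hD2fst]
      have hnotJD1 : ¬ isJ E D1 := by
        intro h
        have hrotD1a : E.rot Da.symm = D1 := by
          rw [← fp_apply]
          exact hfDa
        have hDasymm_ne : Da.symm ≠ D1 := by
          intro hcon
          have h2 := congrArg (fun x : G.Dart => x.snd) hcon
          rw [symm_snd] at h2
          exact hxz h2
        have hcyne : E.rot D1 ≠ Da.symm := by
          intro hcon
          exact no2 E hc (by rw [symm_fst, hD1fst]) hDasymm_ne hrotD1a hcon
        have hcyne2 : E.rot D1 ≠ D1 := rot_ne E hc D1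
        -- the face of D1.symm
        have hfD1symm : E.facePerm D1.symm = E.rot D1 := by
          rw [fp_apply, Dart.symm_symm]
        have hclose' : E.facePerm (E.facePerm (E.facePerm D1.symm)) = D1.symm :=
          fp_three E h
        rw [hfD1symm] at hclose'
        have hqsnd : (E.facePerm (E.rot D1)).snd = D1.snd := by
          have h1 := fp_fst E (E.facePerm (E.rot D1))
          rw [hclose'] at h1
          exact h1.symm
        have hb'z : (E.rot D1).snd ≠ D1.snd := snd_ne_of_ne (rot_fst E D1) hcyne2
        have hb'x : (E.rot D1).snd ≠ Da.fst := by
          have h1 := snd_ne_of_ne (show (E.rot D1).fst = Da.symm.fst by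
            rw [rot_fst, symm_fst, hD1fst]) hcyne
          rwa [symm_snd] at h1
        refine share bad hc (a := Da.snd) (b := D1.snd) (c := Da.fst)
          (b' := (E.rot D1).snd) (c' := D1.snd) ?_ ?_ ?_ ?_ ?_ ?_ hb'z hb'x
        · exact dart_adj' D1 hD1fst rfl
        · exact dart_adj' D2 hD2fst hD2snd
        · exact Da.adj
        · exact dart_adj' (E.rot D1) (by rw [rot_fst, hD1fst]) rfl
        · exact dart_adj' (E.facePerm (E.rot D1)) (fp_fst E (E.rot D1)) hqsnd
        · exact (dart_adj' D1 hD1fst rfl).symm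
      have hnotJD2 : ¬ isJ E D2 := by
        intro h
        have hrotD2a : E.rot D1.symm = D2 := by
          rw [← fp_apply]
          exact hfD1
        have hD1symm_ne : D1.symm ≠ D2 := by
          intro hcon
          have h2 := congrArg (fun x : G.Dart => x.snd) hcon
          rw [symm_snd, hD2snd, hD1fst] at h2
          exact Dart.fst_ne_snd Da h2.symm
        have hczne : E.rot D2 ≠ D1.symm := by
          intro hcon
          exact no2 E hc (by rw [symm_fst, hD2fst]) hD1symm_ne hrotD2a hcon
        have hczne2 : E.rot D2 ≠ D2 := rot_ne E hc D2
        have hfD2symm : E.facePerm D2.symm = E.rot D2 := by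
          rw [fp_apply, Dart.symm_symm]
        have hclose' : E.facePerm (E.facePerm (E.facePerm D2.symm)) = D2.symm :=
          fp_three E h
        rw [hfD2symm] at hclose'
        have hqsnd : (E.facePerm (E.rot D2)).snd = D2.snd := by
          have h1 := fp_fst E (E.facePerm (E.rot D2))
          rw [hclose'] at h1
          exact h1.symm
        have hb'x : (E.rot D2).snd ≠ D2.snd := snd_ne_of_ne (rot_fst E D2) hczne2
        have hb'y : (E.rot D2).snd ≠ Da.snd := by
          have h1 := snd_ne_of_ne (show (E.rot D2).fst = D1.symm.fst by
            rw [rot_fst, symm_fst, hD2fst]) hczne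
          rwa [symm_snd, hD1fst] at h1
        have hb'x' : (E.rot D2).snd ≠ Da.fst := by
          rw [← hD2snd]
          exact hb'x
        refine share bad hc (a := D1.snd) (b := Da.fst) (c := Da.snd)
          (b' := (E.rot D2).snd) (c' := Da.fst) ?_ ?_ ?_ ?_ ?_ ?_ hb'x' hb'y
        · exact dart_adj' D2 hD2fst hD2snd
        · exact Da.adj
        · exact dart_adj' D1 hD1fst rfl
        · exact dart_adj' (E.rot D2) (by rw [rot_fst, hD2fst]) rfl
        · have h1 : (E.facePerm (E.rot D2)).snd = Da.fst := by rw [hqsnd, hD2snd]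
          exact dart_adj' (E.facePerm (E.rot D2)) (fp_fst E (E.rot D2)) h1
        · exact (dart_adj' D2 hD2fst hD2snd).symm
      -- the five block darts are distinct and lie in the face of d₀
      have hDune : ∀ a b : G.Dart, a.fst ≠ b.fst → a ≠ b := by
        intro a b h hcon
        rw [hcon] at h
        exact h rfl
      have hSune : ∀ a b : G.Dart, a.snd ≠ b.snd → a ≠ b := by
        intro a b h hcon
        rw [hcon] at h
        exact h rfl
      have nMa : Dm ≠ Da := hDune _ _ (by rw [hDmfst]; exact hx₃x)
      have nM1 : Dm ≠ D1 := hDune _ _ (by rw [hDmfst, hD1fst]; exact hx₃y)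
      have nM2 : Dm ≠ D2 := hDune _ _ (by rw [hDmfst, hD2fst]; exact hx₃z)
      have nM3 : Dm ≠ D3 := hDune _ _ (by rw [hDmfst]; exact Dart.snd_ne_fst D3)
      have na1 : Da ≠ D1 := hDune _ _ (by rw [hD1fst]; exact Dart.fst_ne_snd Da)
      have na2 : Da ≠ D2 := hDune _ _ (by rw [hD2fst]; exact hxz)
      have na3 : Da ≠ D3 := hSune _ _ (Ne.symm hx₃y)
      have n12 : D1 ≠ D2 := hDune _ _ (by rw [hD2fst]; exact Dart.fst_ne_snd D1)
      have n13 : D1 ≠ D3 := hDune _ _ (by rw [hD1fst, hD3fstx]; exact Dart.snd_ne_fst Da)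
      have n23 : D2 ≠ D3 := hDune _ _ (by rw [hD2fst, hD3fstx]; exact Ne.symm hxz)
      set C5 : Finset G.Dart := {Dm, Da, D1, D2, D3} with hC5
      have hC5card : C5.card = 5 := by
        rw [hC5, Finset.card_insert_of_notMem (by simp [nMa, nM1, nM2, nM3]),
          Finset.card_insert_of_notMem (by simp [na1, na2, na3]),
          Finset.card_insert_of_notMem (by simp [n12, n13]),
          Finset.card_insert_of_notMem (by simp [n23]), Finset.card_singleton]
      have hC5sub : C5 ⊆ orbF E.facePerm d₀ := by
        intro e he
        rw [hC5] at he
        simp only [Finset.mem_insert, Finset.mem_singleton] at he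
        rcases he with rfl | rfl | rfl | rfl | rfl
        · exact hmem (i0 + (s - 1))
        · exact hmem i0
        · exact hmem (i0 + 1)
        · exact hmem (i0 + 2)
        · exact hmem (i0 + 3)
      have hAC5 : Disjoint A C5 := by
        rw [Finset.disjoint_left]
        intro a ha haC5
        have hJa := hAisJ a ha
        rw [hC5] at haC5
        simp only [Finset.mem_insert, Finset.mem_singleton] at haC5
        rcases haC5 with rfl | rfl | rfl | rfl | rfl
        · exact hnotJDm hJa
        · exact hnotJDa hJa
        · exact hnotJD1 hJa
        · exact hnotJD2 hJa
        · exact hnotJD3 hJa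
      set Bm := B \ {Dm} with hBm
      have hBmcard : j - 1 ≤ Bm.card := by
        have h := Finset.le_card_sdiff ({Dm} : Finset G.Dart) B
        rw [Finset.card_singleton, hBcard] at h
        exact h
      have hABm : Disjoint A Bm := Finset.disjoint_of_subset_right Finset.sdiff_subset hAB
      have hBmC5 : Disjoint Bm C5 := by
        rw [Finset.disjoint_left]
        intro b hb hbC5
        rw [hBm, Finset.mem_sdiff, Finset.mem_singleton] at hb
        obtain ⟨hbB, hbDm⟩ := hb
        rw [hB, Finset.mem_image] at hbB
        obtain ⟨a, ha, rfl⟩ := hbB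
        have hJa := hAisJ a ha
        rw [hC5] at hbC5
        simp only [Finset.mem_insert, Finset.mem_singleton] at hbC5
        rcases hbC5 with h | h | h | h | h
        · exact hbDm h
        · -- f a = Da = f Dm
          have : a = Dm := E.facePerm.injective (by rw [h, ← hfDm])
          rw [this] at hJa
          exact hnotJDm hJa
        · have : a = Da := E.facePerm.injective (by rw [h, ← hfDa])
          rw [this] at hJa
          exact hnotJDa hJa
        · have : a = D1 := E.facePerm.injective (by rw [h, ← hfD1])
          rw [this] at hJa
          exact hnotJD1 hJa
        · have : a = D2 := E.facePerm.injective (by rw [h, ← hfD2])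
          rw [this] at hJa
          exact hnotJD2 hJa
      -- counting
      have hUsub : A ∪ Bm ∪ C5 ⊆ orbF E.facePerm d₀ := by
        refine Finset.union_subset (Finset.union_subset hAsub ?_) hC5sub
        exact (Finset.sdiff_subset).trans hBsub
      have hUcard : (A ∪ Bm ∪ C5).card = j + Bm.card + 5 := by
        rw [Finset.card_union_of_disjoint, Finset.card_union_of_disjoint hABm, hC5card]
        rw [Finset.disjoint_union_left]
        exact ⟨hAC5, hBmC5⟩
      have hUle : j + Bm.card + 5 ≤ s := by
        rw [← hUcard]
        exact Finset.card_le_card hUsub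
      have hj1 : j = 1 ∧ s = 6 ∧ Bm.card = 0 := by omega
      obtain ⟨hj1', hs6', hBm0⟩ := hj1
      obtain ⟨dstar, hdstar⟩ := Finset.card_eq_one.1 (by rw [← hj]; exact hj1')
      have hdstarA : dstar ∈ A := by
        rw [hdstar]
        exact Finset.mem_singleton_self dstar
      have hfdstar : E.facePerm dstar = Dm := by
        have h1 : E.facePerm dstar ∈ B := by
          rw [hB]
          exact Finset.mem_image_of_mem _ hdstarA
        have h2 : B ⊆ {Dm} := by
          rw [← Finset.sdiff_eq_empty_iff_subset, ← hBm]
          exact Finset.card_eq_zero.1 hBm0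
        have := h2 h1
        rwa [Finset.mem_singleton] at this
      -- the face of d₀ is exactly A ∪ C5
      have hAC5card : (A ∪ C5).card = 6 := by
        rw [Finset.card_union_of_disjoint hAC5, hC5card, ← hj, hj1']
      have hEqU : A ∪ C5 = orbF E.facePerm d₀ := by
        apply Finset.eq_of_subset_of_card_le (Finset.union_subset hAsub hC5sub)
        have : (orbF E.facePerm d₀).card = s := rfl
        omega
      -- the successor of D3 has nowhere to go
      have hestar : E.facePerm D3 ∈ orbF E.facePerm d₀ := by
        have h1 := (mem_orbF _).1 (hmem (i0 + 3))
        exact (mem_orbF _).2 (Equiv.Perm.sameCycle_apply_right.2 h1)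
      rw [← hEqU, Finset.mem_union] at hestar
      have hestarfst : (E.facePerm D3).fst = D3.snd := fp_fst E D3
      rcases hestar with hin | hin
      · -- f D3 = dstar
        rw [hdstar, Finset.mem_singleton] at hin
        have hdsnd : dstar.snd = D3.snd := by
          have h1 : (E.facePerm dstar).fst = dstar.snd := fp_fst E dstar
          rw [hfdstar, hDmfst] at h1
          exact h1.symm
        have hdfst : dstar.fst = D3.snd := by
          rw [← hin]
          exact hestarfst
        exact Dart.fst_ne_snd dstar (hdfst.trans hdsnd.symm)
      · rw [hC5] at hin
        simp only [Finset.mem_insert, Finset.mem_singleton] at hin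
        rcases hin with h | h | h | h | h
        · rw [hDm] at h
          exact fp_ne_symm E hc D3 h
        · have h1 := congrArg (fun e : G.Dart => e.fst) h
          rw [hestarfst] at h1
          exact hx₃x h1
        · have h1 := congrArg (fun e : G.Dart => e.fst) h
          rw [hestarfst, hD1fst] at h1
          exact hx₃y h1
        · have h1 := congrArg (fun e : G.Dart => e.fst) h
          rw [hestarfst, hD2fst] at h1
          exact hx₃z h1
        · exact hfne D3 h
    · -- δ = 4 or 5 : a short cycle
      have hcyc := cycle_of_seq δ (by omega) (fun n => t (i0 + n))
        (fun n _ => by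
          show G.Adj (t (i0 + n)) (t (i0 + (n + 1)))
          rw [show i0 + (n + 1) = (i0 + n) + 1 by omega]
          exact hadj (i0 + n))
        hi0.symm hshiftinj
      exact bad δ hcyc ⟨by omega, by omega⟩
  · -- no repeats : the face boundary is a cycle of length s
    have hinjt : ∀ i j, i < s → j < s → t i = t j → i = j := by
      intro i j hi hj h
      by_contra hne
      rcases Nat.lt_or_ge i j with hlt | hge
      · exact hK ⟨j - i, by omega, by omega, i,
          by rw [show i + (j - i) = j by omega]; exact h⟩
      · have hlt' : j < i := by omega
        exact hK ⟨i - j, by omega, by omega, j,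
          by rw [show j + (i - j) = i by omega]; exact h.symm⟩
    have hclosure : t s = t 0 := by
      have := htper 0
      rwa [Nat.zero_add] at this
    exact bad s (cycle_of_seq s (by omega) t (fun i _ => hadj i) hclosure hinjt)
      ⟨by omega, by omega⟩

end Main

end MerkerAux

/-- Merker's conjecture holds for `k = 4`: every 3-connected cubic planar graph
of circumference at least 4 has a cycle of length `ℓ` with `4 ≤ ℓ ≤ 10`. -/
theorem statement3 (V : Type) [Fintype V] (G : SimpleGraph V)
    (h3 : IsThreeConnected G) (hc : IsCubic G) (hp : IsPlanar G)
    (hcirc : CircumferenceAtLeast G 4) :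
    ∃ ℓ ∈ CycleLengths G, 4 ≤ ℓ ∧ ℓ ≤ 10 := by
  by_contra hcon
  push_neg at hcon
  obtain ⟨-, E, hE⟩ := hp
  refine MerkerAux.merker_core hc E hE ?_
  intro n hn h
  have := hcon n hn h.1
  omega
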